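/- arXiv:1804.06699 — 5 statements merged into one kernel-verified Lean document; each statement's English description precedes it below -/
import Mathlib

section
/- With the setting of the polyhedron construction: let I = ∩_{i=1}^p B_i (open balls with centers c_i ≠ c), B the closed ball of center c and radius R, and P⁺ = ∩_{i=1}^p H_i where H_i = {x : h_i(x) < 0} with h_i(x) = Σₖ(2xₖ - (cₖ + c_{ik}))(cₖ - c_{ik}) + (R² - R_i²). If P⁺ = ∅, then I ⊆ B. -/
open Metric MeasureTheory Finset

theorem stmt9 (n p : ℕ) (c : EuclideanSpace ℝ (Fin n)) (R : ℝ) (hR : 0 < R)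
    (ci : Fin p → EuclideanSpace ℝ (Fin n)) (Ri : Fin p → ℝ)
    (hci : ∀ i, ci i ≠ c) (hRi : ∀ i, 0 < Ri i)
    (hemp : {x : EuclideanSpace ℝ (Fin n) | ∀ i, ∑ k, (2 * x k - (c k + ci i k)) * (c k - ci i k) + (R^2 - (Ri i)^2) < 0} = ∅) :
    (⋂ i, ball (ci i) (Ri i)) ⊆ closedBall c R := by
  intro x hx
  by_contra hB
  have hxB : x ∈ {x : EuclideanSpace ℝ (Fin n) | ∀ i, ∑ k, (2 * x k - (c k + ci i k)) * (c k - ci i k) + (R^2 - (Ri i)^2) < 0} := by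
    intro i
    have hxi : dist x (ci i) < Ri i := by
      have := Set.mem_iInter.mp hx i
      simpa [mem_ball] using this
    have hxc : R < dist x c := by
      simpa [mem_closedBall, not_le] using hB
    have h1 : dist x (ci i) ^ 2 = ∑ k, (x k - ci i k) ^ 2 := by
      rw [EuclideanSpace.dist_eq, Real.sq_sqrt (by positivity)]
      exact Finset.sum_congr rfl fun k _ => by rw [Real.dist_eq, sq_abs]
    have h2 : dist x c ^ 2 = ∑ k, (x k - c k) ^ 2 := by
      rw [EuclideanSpace.dist_eq, Real.sq_sqrt (by positivity)]
      exact Finset.sum_congr rfl fun k _ => by rw [Real.dist_eq, sq_abs]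
    have key : ∑ k, (2 * x k - (c k + ci i k)) * (c k - ci i k)
        = ∑ k, (x k - ci i k) ^ 2 - ∑ k, (x k - c k) ^ 2 := by
      rw [← Finset.sum_sub_distrib]
      exact Finset.sum_congr rfl fun k _ => by ring
    have hlt1 : dist x (ci i) ^ 2 < Ri i ^ 2 :=
      pow_lt_pow_left₀ hxi dist_nonneg (by norm_num)
    have hlt2 : R ^ 2 < dist x c ^ 2 :=
      pow_lt_pow_left₀ hxc hR.le (by norm_num)
    rw [key, ← h1, ← h2]
    linarith
  rw [hemp] at hxB
  exact hxB
end

section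
/- Let B be the closed ball of center c and radius R in ℝⁿ, and B_1',...,B_{q-1}' closed balls with centers c_j' ≠ c and radii R_j'. Define h_j'(x) = Σₖ(2xₖ - (cₖ + c'_{jk}))(cₖ - c'_{jk}) + (R² - R_j'²) and P⁻ = ∩_{j=1}^{q-1} {x : h_j'(x) > 0}. If P⁻ = ∅, then B ⊆ ∪_{j=1}^{q-1} B_j'. -/
open Metric MeasureTheory Finset

theorem stmt10 (n m : ℕ) (c : EuclideanSpace ℝ (Fin n)) (R : ℝ) (hR : 0 < R)
    (cj : Fin m → EuclideanSpace ℝ (Fin n)) (Rj : Fin m → ℝ)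
    (hcj : ∀ j, cj j ≠ c) (hRj : ∀ j, 0 < Rj j)
    (hemp : {x : EuclideanSpace ℝ (Fin n) | ∀ j, 0 < ∑ k, (2 * x k - (c k + cj j k)) * (c k - cj j k) + (R^2 - (Rj j)^2)} = ∅) :
    closedBall c R ⊆ ⋃ j, closedBall (cj j) (Rj j) := by
  intro x hx
  by_contra hcon
  simp only [Set.mem_iUnion, mem_closedBall, not_exists, not_le] at hcon
  have hx' : dist x c ≤ R := mem_closedBall.mp hx
  have key : x ∈ {x : EuclideanSpace ℝ (Fin n) | ∀ j, 0 < ∑ k, (2 * x k - (c k + cj j k)) * (c k - cj j k) + (R^2 - (Rj j)^2)} := by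
    intro j
    have h1 : ∑ k, (x k - c k)^2 ≤ R^2 := by
      have h := hx'
      rw [EuclideanSpace.dist_eq] at h
      simp only [Real.dist_eq, sq_abs] at h
      calc ∑ k, (x k - c k)^2
          = (Real.sqrt (∑ k, (x k - c k)^2))^2 := (Real.sq_sqrt (by positivity)).symm
        _ ≤ R^2 := by apply pow_le_pow_left₀ (Real.sqrt_nonneg _) h
    have h2 : (Rj j)^2 < ∑ k, (x k - cj j k)^2 := by
      have h := hcon j
      rw [EuclideanSpace.dist_eq] at h
      simp only [Real.dist_eq, sq_abs] at h
      calc (Rj j)^2 < (Real.sqrt (∑ k, (x k - cj j k)^2))^2 := by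
            apply pow_lt_pow_left₀ h (le_of_lt (hRj j))
            norm_num
        _ = ∑ k, (x k - cj j k)^2 := Real.sq_sqrt (by positivity)
    have hid : ∑ k, (2 * x k - (c k + cj j k)) * (c k - cj j k)
        = (∑ k, (x k - cj j k)^2) - ∑ k, (x k - c k)^2 := by
      rw [← Finset.sum_sub_distrib]
      exact Finset.sum_congr rfl (fun k _ => by ring)
    rw [hid]
    linarith
  rw [hemp] at key
  exact key
end

section
/- In the setting of the polyhedron P associated with the covering problem (with balls B_1,...,B_p in Λ, balls B_1',...,B_{q-1}' of 𝔘, ball B of center c and radius R, I = ∩B_i, 𝔘 = ∪B_j', U = 𝔘 ∪ B, S = ∂B): if there exist x⁻, x⁺ in the closure Π of P with ‖x⁻ - c‖² < R² < ‖x⁺ - c‖² and P ≠ ∅, then I \ U is nonempty and has strictly positive Lebesgue measure, and I ∩ U also has strictly positive Lebesgue measure. -/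
open Metric MeasureTheory Finset

set_option maxHeartbeats 1000000 in
theorem stmt11 (n p m : ℕ) (c : EuclideanSpace ℝ (Fin n)) (R : ℝ) (hR : 0 < R)
    (ci : Fin p → EuclideanSpace ℝ (Fin n)) (Ri : Fin p → ℝ)
    (cj : Fin m → EuclideanSpace ℝ (Fin n)) (Rj : Fin m → ℝ)
    (hci : ∀ i, ci i ≠ c) (hcj : ∀ j, cj j ≠ c)
    (hRi : ∀ i, 0 < Ri i) (hRj : ∀ j, 0 < Rj j)
    (xm xp : EuclideanSpace ℝ (Fin n))
    (hxm : xm ∈ closure {x | (∀ i, ∑ k, (2 * x k - (c k + ci i k)) * (c k - ci i k) + (R^2 - (Ri i)^2) < 0) ∧ (∀ j, 0 < ∑ k, (2 * x k - (c k + cj j k)) * (c k - cj j k) + (R^2 - (Rj j)^2))})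
    (hxp : xp ∈ closure {x | (∀ i, ∑ k, (2 * x k - (c k + ci i k)) * (c k - ci i k) + (R^2 - (Ri i)^2) < 0) ∧ (∀ j, 0 < ∑ k, (2 * x k - (c k + cj j k)) * (c k - cj j k) + (R^2 - (Rj j)^2))})
    (hPne : ({x | (∀ i, ∑ k, (2 * x k - (c k + ci i k)) * (c k - ci i k) + (R^2 - (Ri i)^2) < 0) ∧ (∀ j, 0 < ∑ k, (2 * x k - (c k + cj j k)) * (c k - cj j k) + (R^2 - (Rj j)^2))} : Set (EuclideanSpace ℝ (Fin n))).Nonempty)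
    (h1 : ‖xm - c‖^2 < R^2) (h2 : R^2 < ‖xp - c‖^2) :
    ((⋂ i, ball (ci i) (Ri i)) \ ((⋃ j, closedBall (cj j) (Rj j)) ∪ closedBall c R)).Nonempty ∧
    0 < volume ((⋂ i, ball (ci i) (Ri i)) \ ((⋃ j, closedBall (cj j) (Rj j)) ∪ closedBall c R)) ∧
    0 < volume ((⋂ i, ball (ci i) (Ri i)) ∩ ((⋃ j, closedBall (cj j) (Rj j)) ∪ closedBall c R)) := by
  classical
  set P : Set (EuclideanSpace ℝ (Fin n)) :=
    {x | (∀ i, ∑ k, (2 * x k - (c k + ci i k)) * (c k - ci i k) + (R^2 - (Ri i)^2) < 0) ∧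
      (∀ j, 0 < ∑ k, (2 * x k - (c k + cj j k)) * (c k - cj j k) + (R^2 - (Rj j)^2))} with hPdef
  -- squared norm as a sum
  have normsq : ∀ x : EuclideanSpace ℝ (Fin n), ‖x‖^2 = ∑ k, (x k)^2 := by
    intro x
    rw [EuclideanSpace.norm_eq, Real.sq_sqrt (by positivity)]
    simp [sq_abs]
  -- radical hyperplane identity
  have key : ∀ (x a : EuclideanSpace ℝ (Fin n)) (r : ℝ),
      (∑ k, (2 * x k - (c k + a k)) * (c k - a k)) + (R^2 - r^2)
        = (‖x - a‖^2 - r^2) - (‖x - c‖^2 - R^2) := by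
    intro x a r
    have hsub : ∀ (y : EuclideanSpace ℝ (Fin n)) (k : Fin n), (x - y) k = x k - y k :=
      fun y k => rfl
    rw [normsq (x - a), normsq (x - c)]
    simp_rw [hsub]
    have hpt : ∑ k, (2 * x k - (c k + a k)) * (c k - a k)
        = ∑ k, ((x k - a k)^2 - (x k - c k)^2) :=
      Finset.sum_congr rfl (fun k _ => by ring)
    rw [hpt, Finset.sum_sub_distrib]
    ring
  -- f measures signed squared distance to the sphere
  set f : EuclideanSpace ℝ (Fin n) → ℝ := fun x => ‖x - c‖^2 - R^2 with hfdef
  have hfc : Continuous f := by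
    apply Continuous.sub _ continuous_const
    exact ((continuous_id.sub continuous_const).norm.pow 2)
  have hfm : f xm < 0 := by simp only [hfdef]; linarith
  have hfp : 0 < f xp := by simp only [hfdef]; linarith
  -- points of P with negative / positive f
  have getpt : ∀ (x0 : EuclideanSpace ℝ (Fin n)), x0 ∈ closure P →
      ∀ (s : Set ℝ), IsOpen s → f x0 ∈ s → ∃ y ∈ P, f y ∈ s := by
    intro x0 hx0 s hs hmem
    rcases mem_closure_iff.mp hx0 (f ⁻¹' s) (hs.preimage hfc) hmem with ⟨y, hy1, hy2⟩
    exact ⟨y, hy2, hy1⟩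
  obtain ⟨ym, hymP, hym⟩ := getpt xm hxm (Set.Iio 0) isOpen_Iio hfm
  obtain ⟨yp, hypP, hyp⟩ := getpt xp hxp (Set.Ioi 0) isOpen_Ioi hfp
  simp only [Set.mem_Iio] at hym
  simp only [Set.mem_Ioi] at hyp
  -- the segment from ym to yp stays in P
  have hseg : ∀ t : ℝ, 0 ≤ t → t ≤ 1 → ((1 - t) • ym + t • yp) ∈ P := by
    intro t ht0 ht1
    obtain ⟨hm1, hm2⟩ := hymP
    obtain ⟨hp1, hp2⟩ := hypP
    have happ : ∀ k : Fin n, ((1 - t) • ym + t • yp) k = (1 - t) * ym k + t * yp k :=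
      fun k => rfl
    have mix : ∀ (a : EuclideanSpace ℝ (Fin n)) (r : ℝ),
        (∑ k, (2 * ((1 - t) • ym + t • yp) k - (c k + a k)) * (c k - a k)) + (R^2 - r^2)
          = (1 - t) * ((∑ k, (2 * ym k - (c k + a k)) * (c k - a k)) + (R^2 - r^2))
            + t * ((∑ k, (2 * yp k - (c k + a k)) * (c k - a k)) + (R^2 - r^2)) := by
      intro a r
      have hk : ∀ k ∈ Finset.univ, (2 * ((1 - t) • ym + t • yp) k - (c k + a k)) * (c k - a k)
          = (1 - t) * ((2 * ym k - (c k + a k)) * (c k - a k))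
            + t * ((2 * yp k - (c k + a k)) * (c k - a k)) := by
        intro k _
        rw [happ k]
        ring
      rw [Finset.sum_congr rfl hk, Finset.sum_add_distrib, ← Finset.mul_sum, ← Finset.mul_sum]
      ring
    have convneg : ∀ A B : ℝ, A < 0 → B < 0 → (1 - t) * A + t * B < 0 := by
      intro A B hA hB
      rcases eq_or_lt_of_le ht0 with h | h
      · have he : (1 - t) * A + t * B = A := by rw [← h]; ring
        rw [he]; exact hA
      · have h1 : t * B < 0 := mul_neg_of_pos_of_neg h hB
        have h2 : (1 - t) * A ≤ 0 := mul_nonpos_of_nonneg_of_nonpos (by linarith) hA.le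
        linarith
    constructor
    · intro i
      rw [mix (ci i) (Ri i)]
      exact convneg _ _ (hm1 i) (hp1 i)
    · intro j
      rw [mix (cj j) (Rj j)]
      have := convneg _ _ (neg_neg_iff_pos.mpr (hm2 j)) (neg_neg_iff_pos.mpr (hp2 j))
      nlinarith [this]
  -- intermediate value: find z on the segment with f z = 0
  have hpath : Continuous fun t : ℝ => (1 - t) • ym + t • yp := by
    exact ((continuous_const.sub continuous_id).smul continuous_const).add
      (continuous_id.smul continuous_const)
  have hcont : Continuous fun t : ℝ => f ((1 - t) • ym + t • yp) := hfc.comp hpath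
  have hiv := intermediate_value_Icc (zero_le_one (α := ℝ)) hcont.continuousOn
  have h0mem : (0 : ℝ) ∈ Set.Icc (f ((1 - (0:ℝ)) • ym + (0:ℝ) • yp))
      (f ((1 - (1:ℝ)) • ym + (1:ℝ) • yp)) := by
    simp only [sub_zero, one_smul, zero_smul, add_zero, sub_self, zero_add]
    exact ⟨le_of_lt hym, le_of_lt hyp⟩
  obtain ⟨t, ht, hft⟩ := hiv h0mem
  set z : EuclideanSpace ℝ (Fin n) := (1 - t) • ym + t • yp with hzdef
  have hzP : z ∈ P := hseg t ht.1 ht.2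
  have hznorm : ‖z - c‖ = R := by
    have h0 : ‖z - c‖^2 = R^2 := by
      have : f z = 0 := hft
      simp only [hfdef] at this
      linarith
    nlinarith [norm_nonneg (z - c), hR]
  -- characterize z's position w.r.t. the balls
  obtain ⟨hz1, hz2⟩ := hzP
  have hzball : ∀ i, ‖z - ci i‖ < Ri i := by
    intro i
    have := hz1 i
    rw [key z (ci i) (Ri i)] at this
    have h0 : ‖z - ci i‖^2 < (Ri i)^2 := by
      rw [hznorm] at this; nlinarith
    nlinarith [norm_nonneg (z - ci i), hRi i]
  have hzout : ∀ j, Rj j < ‖z - cj j‖ := by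
    intro j
    have := hz2 j
    rw [key z (cj j) (Rj j)] at this
    have h0 : (Rj j)^2 < ‖z - cj j‖^2 := by
      rw [hznorm] at this; nlinarith
    nlinarith [norm_nonneg (z - cj j), hRj j]
  -- open set of strict conditions
  set W : Set (EuclideanSpace ℝ (Fin n)) :=
    (⋂ i, ball (ci i) (Ri i)) ∩ (⋂ j, (closedBall (cj j) (Rj j))ᶜ) with hWdef
  have hWopen : IsOpen W :=
    (isOpen_iInter_of_finite fun i => isOpen_ball).inter
      (isOpen_iInter_of_finite fun j => Metric.isClosed_closedBall.isOpen_compl)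
  have hzW : z ∈ W := by
    constructor
    · exact Set.mem_iInter.mpr fun i => by
        rw [mem_ball, dist_eq_norm]; exact hzball i
    · exact Set.mem_iInter.mpr fun j => by
        simp only [Set.mem_compl_iff, mem_closedBall, dist_eq_norm, not_le]
        exact hzout j
  -- perturb z outward along z - c
  set φ : ℝ → EuclideanSpace ℝ (Fin n) := fun s => z + s • (z - c) with hφdef
  have hφc : Continuous φ := continuous_const.add (continuous_id.smul continuous_const)
  have hφ0 : φ 0 = z := by simp [hφdef]
  have hnhds : φ ⁻¹' W ∈ nhds (0 : ℝ) := by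
    apply hφc.continuousAt.preimage_mem_nhds
    rw [hφ0]
    exact hWopen.mem_nhds hzW
  obtain ⟨ε, hε, hball⟩ := Metric.mem_nhds_iff.mp hnhds
  set s : ℝ := ε / 2 with hsdef
  have hs0 : 0 < s := by positivity
  have hsmem : φ s ∈ W := by
    apply hball
    simp only [mem_ball, Real.dist_eq, sub_zero]
    rw [abs_of_pos hs0]
    linarith
  set w : EuclideanSpace ℝ (Fin n) := φ s with hwdef
  have hwc : w - c = (1 + s) • (z - c) := by
    simp only [hwdef, hφdef]
    module
  have hwnorm : ‖w - c‖ = (1 + s) * R := by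
    rw [hwc, norm_smul, Real.norm_eq_abs, abs_of_pos (by linarith), hznorm]
  have hwR : R < ‖w - c‖ := by
    have h' : (1 + s) * R = R + s * R := by ring
    rw [hwnorm, h']
    have := mul_pos hs0 hR
    linarith
  -- w witnesses nonemptiness of I \ U
  have hwmem : w ∈ (⋂ i, ball (ci i) (Ri i)) \ ((⋃ j, closedBall (cj j) (Rj j)) ∪ closedBall c R) := by
    obtain ⟨hw1, hw2⟩ := hsmem
    refine ⟨hw1, ?_⟩
    rintro (h | h)
    · obtain ⟨_, ⟨j, rfl⟩, hj⟩ := h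
      exact (Set.mem_iInter.mp hw2 j) hj
    · rw [mem_closedBall, dist_eq_norm] at h
      linarith
  -- the difference is open
  have hIopen : IsOpen (⋂ i, ball (ci i) (Ri i)) :=
    isOpen_iInter_of_finite fun i => isOpen_ball
  have hUclosed : IsClosed ((⋃ j, closedBall (cj j) (Rj j)) ∪ closedBall c R) :=
    (isClosed_iUnion_of_finite fun j => Metric.isClosed_closedBall).union Metric.isClosed_closedBall
  have hdiffopen : IsOpen ((⋂ i, ball (ci i) (Ri i)) \ ((⋃ j, closedBall (cj j) (Rj j)) ∪ closedBall c R)) :=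
    hIopen.sdiff hUclosed
  refine ⟨⟨w, hwmem⟩, hdiffopen.measure_pos volume ⟨w, hwmem⟩, ?_⟩
  -- ym lies in I ∩ ball c R ⊆ I ∩ U
  obtain ⟨hm1, hm2⟩ := hymP
  have hymI : ym ∈ ⋂ i, ball (ci i) (Ri i) := by
    apply Set.mem_iInter.mpr
    intro i
    have := hm1 i
    rw [key ym (ci i) (Ri i)] at this
    have hymf : f ym < 0 := hym
    simp only [hfdef] at hymf
    have h0 : ‖ym - ci i‖^2 < (Ri i)^2 := by nlinarith
    rw [mem_ball, dist_eq_norm]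
    nlinarith [norm_nonneg (ym - ci i), hRi i]
  have hymB : ym ∈ ball c R := by
    have hymf : f ym < 0 := hym
    simp only [hfdef] at hymf
    rw [mem_ball, dist_eq_norm]
    nlinarith [norm_nonneg (ym - c)]
  have hsub : (⋂ i, ball (ci i) (Ri i)) ∩ ball c R
      ⊆ (⋂ i, ball (ci i) (Ri i)) ∩ ((⋃ j, closedBall (cj j) (Rj j)) ∪ closedBall c R) :=
    Set.inter_subset_inter_right _ (fun x hx => Or.inr (ball_subset_closedBall hx))
  calc (0 : ENNReal) < volume ((⋂ i, ball (ci i) (Ri i)) ∩ ball c R) :=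
        (hIopen.inter isOpen_ball).measure_pos volume ⟨ym, hymI, hymB⟩
    _ ≤ _ := measure_mono hsub
end

section
/- In the setting of the polyhedron P: if for every point x in the closure Π of P one has ‖x - c‖² ≥ R², or for every such x one has ‖x - c‖² ≤ R², then I ∩ (S \ 𝔘) = ∅, i.e., the intersection of balls I does not meet the part of the sphere S = ∂B outside the union 𝔘. -/
open Metric MeasureTheory Finset

private lemma normsq' {n : ℕ} (y : EuclideanSpace ℝ (Fin n)) : ‖y‖ ^ 2 = ∑ k, (y k) ^ 2 := by
  rw [EuclideanSpace.norm_eq, Real.sq_sqrt (by positivity)]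
  simp [sq_abs]

private lemma keyeq' {n : ℕ} (x a c : EuclideanSpace ℝ (Fin n)) :
    ∑ k, (2 * x k - (c k + a k)) * (c k - a k) = ‖x - a‖ ^ 2 - ‖x - c‖ ^ 2 := by
  rw [normsq', normsq', ← Finset.sum_sub_distrib]
  refine Finset.sum_congr rfl fun k _ => ?_
  have hxa : (x - a) k = x k - a k := rfl
  have hxc : (x - c) k = x k - c k := rfl
  rw [hxa, hxc]; ring

theorem stmt12 (n p m : ℕ) (c : EuclideanSpace ℝ (Fin n)) (R : ℝ) (hR : 0 < R)
    (ci : Fin p → EuclideanSpace ℝ (Fin n)) (Ri : Fin p → ℝ)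
    (cj : Fin m → EuclideanSpace ℝ (Fin n)) (Rj : Fin m → ℝ)
    (hci : ∀ i, ci i ≠ c) (hcj : ∀ j, cj j ≠ c)
    (hRi : ∀ i, 0 < Ri i) (hRj : ∀ j, 0 < Rj j)
    (hB : (∀ x ∈ closure {x | (∀ i, ∑ k, (2 * x k - (c k + ci i k)) * (c k - ci i k) + (R^2 - (Ri i)^2) < 0) ∧ (∀ j, 0 < ∑ k, (2 * x k - (c k + cj j k)) * (c k - cj j k) + (R^2 - (Rj j)^2))}, R^2 ≤ ‖x - c‖^2) ∨
          (∀ x ∈ closure {x | (∀ i, ∑ k, (2 * x k - (c k + ci i k)) * (c k - ci i k) + (R^2 - (Ri i)^2) < 0) ∧ (∀ j, 0 < ∑ k, (2 * x k - (c k + cj j k)) * (c k - cj j k) + (R^2 - (Rj j)^2))}, ‖x - c‖^2 ≤ R^2)) :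
    (⋂ i, ball (ci i) (Ri i)) ∩ (sphere c R \ ⋃ j, closedBall (cj j) (Rj j)) = ∅ := by
  set P : Set (EuclideanSpace ℝ (Fin n)) :=
    {x | (∀ i, ∑ k, (2 * x k - (c k + ci i k)) * (c k - ci i k) + (R^2 - (Ri i)^2) < 0) ∧
         (∀ j, 0 < ∑ k, (2 * x k - (c k + cj j k)) * (c k - cj j k) + (R^2 - (Rj j)^2))} with hPdef
  ext x
  simp only [Set.mem_inter_iff, Set.mem_iInter, mem_ball, Set.mem_diff, mem_sphere,
    Set.mem_iUnion, mem_closedBall, Set.mem_empty_iff_false, iff_false, not_exists, not_le]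
  rintro ⟨hI, hS, hU⟩

  have hxc : ‖x - c‖ = R := by rw [← dist_eq_norm]; exact hS
  -- x ∈ P
  have hxP : x ∈ P := by
    constructor
    · intro i
      rw [keyeq', hxc]
      have h1 : ‖x - ci i‖ < Ri i := by rw [← dist_eq_norm]; exact hI i
      nlinarith [norm_nonneg (x - ci i), hRi i]
    · intro j
      rw [keyeq', hxc]
      have h1 : Rj j < ‖x - cj j‖ := by rw [← dist_eq_norm]; exact hU j
      nlinarith [hRj j]
  -- P is open
  have hPopen : IsOpen P := by
    have : P = (⋂ i : Fin p, (fun x : EuclideanSpace ℝ (Fin n) =>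
          ∑ k, (2 * x k - (c k + ci i k)) * (c k - ci i k) + (R^2 - (Ri i)^2)) ⁻¹' Set.Iio 0) ∩
        (⋂ j : Fin m, (fun x : EuclideanSpace ℝ (Fin n) =>
          ∑ k, (2 * x k - (c k + cj j k)) * (c k - cj j k) + (R^2 - (Rj j)^2)) ⁻¹' Set.Ioi 0) := by
      ext y; simp [hPdef]
    rw [this]
    refine IsOpen.inter (isOpen_iInter_of_finite fun i => ?_)
      (isOpen_iInter_of_finite fun j => ?_)
    · exact IsOpen.preimage (by fun_prop) isOpen_Iio
    · exact IsOpen.preimage (by fun_prop) isOpen_Ioi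
  obtain ⟨ε, hε, hball⟩ := Metric.isOpen_iff.1 hPopen x hxP
  -- perturbation
  have hpert : ∀ t : ℝ, |t| * R < ε → x + t • (x - c) ∈ closure P := by
    intro t ht
    apply subset_closure
    apply hball
    rw [mem_ball, dist_eq_norm]
    have : x + t • (x - c) - x = t • (x - c) := by abel
    rw [this, norm_smul, hxc]
    simpa using ht
  have hnorm : ∀ t : ℝ, ‖x + t • (x - c) - c‖ ^ 2 = (1 + t) ^ 2 * R ^ 2 := by
    intro t
    have : x + t • (x - c) - c = (1 + t) • (x - c) := by
      rw [add_smul, one_smul]; abel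
    rw [this, norm_smul, hxc, mul_pow]
    simp [sq_abs]
  set t₀ : ℝ := min (ε / (2 * R)) (1 / 2) with ht₀
  have ht₀pos : 0 < t₀ := lt_min (by positivity) (by norm_num)
  have ht₀le : t₀ ≤ 1 / 2 := min_le_right _ _
  have htR : |t₀| * R < ε := by
    rw [abs_of_pos ht₀pos]
    calc t₀ * R ≤ ε / (2 * R) * R := by
          have := min_le_left (ε / (2 * R)) (1 / 2); nlinarith
      _ < ε := by rw [div_mul_eq_mul_div]; rw [div_lt_iff₀ (by positivity)]; nlinarith
  rcases hB with hB | hB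
  · -- use negative t
    have h := hB _ (hpert (-t₀) (by rwa [abs_neg]))
    rw [hnorm] at h
    nlinarith [mul_pos ht₀pos (mul_pos hR hR), mul_le_mul_of_nonneg_left ht₀le ht₀pos.le,
      mul_pos (mul_pos ht₀pos ht₀pos) (mul_pos hR hR)]
  · have h := hB _ (hpert t₀ htR)
    rw [hnorm] at h
    nlinarith [mul_pos ht₀pos (mul_pos hR hR), mul_pos (mul_pos ht₀pos ht₀pos) (mul_pos hR hR)]
end

section
/- Let B_1,...,B_p be open balls with centers c_i ≠ c and radii R_i, B the closed ball of center c and radius R, I = ∩ᵢ B_i, and Π = ∩ᵢ {x : h_i(x) ≤ 0} with h_i(x) = (2x − (c + c_i))ᵀ(c − c_i) + (R² − R_i²). If every point of Π lies in B (i.e., Π \ B = ∅), then I ⊆ B. -/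
open Metric MeasureTheory Finset

theorem stmt17 (n p : ℕ) (c : EuclideanSpace ℝ (Fin n)) (R : ℝ) (hR : 0 < R)
    (ci : Fin p → EuclideanSpace ℝ (Fin n)) (Ri : Fin p → ℝ)
    (hci : ∀ i, ci i ≠ c) (hRi : ∀ i, 0 < Ri i)
    (hsub : {x : EuclideanSpace ℝ (Fin n) | ∀ i, ∑ k, (2 * x k - (c k + ci i k)) * (c k - ci i k) + (R^2 - (Ri i)^2) ≤ 0} \ closedBall c R = ∅) :
    (⋂ i, ball (ci i) (Ri i)) ⊆ closedBall c R := by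
  intro x hx
  by_contra hxB
  have hxset : x ∈ {x : EuclideanSpace ℝ (Fin n) | ∀ i, ∑ k, (2 * x k - (c k + ci i k)) * (c k - ci i k) + (R^2 - (Ri i)^2) ≤ 0} := by
    intro i
    have h1 : dist x (ci i) < Ri i := by
      have := Set.mem_iInter.mp hx i
      simpa [mem_ball] using this
    have h2 : R < dist x c := by
      simpa [mem_closedBall, not_le] using hxB
    have hd1 : (dist x (ci i))^2 = ∑ k, (x k - ci i k)^2 := by
      rw [EuclideanSpace.dist_eq]
      rw [Real.sq_sqrt (by positivity)]
      congr 1; ext k; rw [Real.dist_eq, sq_abs]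
    have hd2 : (dist x c)^2 = ∑ k, (x k - c k)^2 := by
      rw [EuclideanSpace.dist_eq]
      rw [Real.sq_sqrt (by positivity)]
      congr 1; ext k; rw [Real.dist_eq, sq_abs]
    have key : (∑ k, (2 * x k - (c k + ci i k)) * (c k - ci i k))
        = (dist x (ci i))^2 - (dist x c)^2 := by
      rw [hd1, hd2, ← Finset.sum_sub_distrib]
      congr 1; ext k; ring
    rw [key]
    have hsq1 : (dist x (ci i))^2 < (Ri i)^2 := by
      apply sq_lt_sq' _ h1
      linarith [dist_nonneg (x := x) (y := ci i), (hRi i)]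
    have hsq2 : R^2 < (dist x c)^2 := by
      apply sq_lt_sq' _ h2
      linarith
    linarith
  have : x ∈ ({x : EuclideanSpace ℝ (Fin n) | ∀ i, ∑ k, (2 * x k - (c k + ci i k)) * (c k - ci i k) + (R^2 - (Ri i)^2) ≤ 0} \ closedBall c R) := ⟨hxset, hxB⟩
  rw [hsub] at this
  exact this
end
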